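/- Let F be a finite field of characteristic p and order q, and let d be an invertible exponent over F. Then there exists some a ∈ F such that |W_{F,d}(a)| > √q. -/

import Mathlib

open scoped BigOperators

/-- The canonical additive character of a finite field `F` of characteristic `p`:
`ψ(x) = exp(2πi·Tr(x)/p)`, where `Tr` is the absolute trace from `F` to `𝔽_p = ZMod p`. -/
noncomputable def canonicalPsi (F : Type*) [Field F] [Fintype F] (p : ℕ) [CharP F p]
    (x : F) : ℂ :=
  letI : Algebra (ZMod p) F := ZMod.algebra F p
  Complex.exp (2 * Real.pi * Complex.I * ((Algebra.trace (ZMod p) F x).val : ℂ) / (p : ℂ))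

/-- The Weil sum `W_{F,d}(a) = ∑_{x ∈ F} ψ(x^d − a·x)`. -/
noncomputable def weilSum (F : Type*) [Field F] [Fintype F] (p : ℕ) [CharP F p]
    (d : ℕ) (a : F) : ℂ :=
  ∑ x : F, canonicalPsi F p (x ^ d - a * x)

section Aux

variable (F : Type*) [Field F] [Fintype F] (p : ℕ) [hp : Fact p.Prime] [CharP F p]

noncomputable def psiChar : AddChar F ℂ :=
  letI : Algebra (ZMod p) F := ZMod.algebra F p
  haveI : NeZero p := ⟨hp.out.ne_zero⟩
  (AddChar.zmodChar p
      ((Complex.isPrimitiveRoot_exp p hp.out.ne_zero).pow_eq_one)).compAddMonoidHom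
    (Algebra.trace (ZMod p) F).toAddMonoidHom

lemma psiChar_eq (x : F) : psiChar F p x = canonicalPsi F p x := by
  letI : Algebra (ZMod p) F := ZMod.algebra F p
  haveI : NeZero p := ⟨hp.out.ne_zero⟩
  have h0 : psiChar F p x = AddChar.zmodChar p
      ((Complex.isPrimitiveRoot_exp p hp.out.ne_zero).pow_eq_one)
      ((Algebra.trace (ZMod p) F) x) := rfl
  rw [h0, AddChar.zmodChar_apply, ← Complex.exp_nat_mul]
  unfold canonicalPsi
  congr 1
  ring

lemma psiChar_ne_one : psiChar F p ≠ 1 := by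
  have hpr : p = ringChar F := (ringChar.eq F p).symm
  subst hpr
  letI : Algebra (ZMod (ringChar F)) F := ZMod.algebra F (ringChar F)
  haveI : NeZero (ringChar F) := ⟨hp.out.ne_zero⟩
  obtain ⟨a, ha⟩ := FiniteField.trace_to_zmod_nondegenerate F (one_ne_zero (α := F))
  rw [one_mul] at ha
  refine AddChar.ne_one_iff.2 ⟨a, fun hf => ha ?_⟩
  have hprim : (AddChar.zmodChar (ringChar F)
      ((Complex.isPrimitiveRoot_exp (ringChar F) hp.out.ne_zero).pow_eq_one)).IsPrimitive :=
    AddChar.zmodChar_primitive_of_primitive_root _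
      (Complex.isPrimitiveRoot_exp (ringChar F) hp.out.ne_zero)
  exact (hprim.zmod_char_eq_one_iff (ringChar F)
    (Algebra.trace (ZMod (ringChar F)) F a)).mp hf

lemma psiChar_isPrimitive : (psiChar F p).IsPrimitive :=
  AddChar.IsPrimitive.of_ne_one (psiChar_ne_one F p)

end Aux

/-- There is some `a ∈ F` such that `|W_{F,d}(a)| > √q`. -/
theorem exists_abs_weilSum_gt_sqrt_card (F : Type*) [Field F] [Fintype F]
    (p : ℕ) [Fact p.Prime] [CharP F p] (d : ℕ) (hd : 0 < d)
    (hgcd : Nat.gcd d (Fintype.card F - 1) = 1) :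
    ∃ a : F, Real.sqrt (Fintype.card F) < ‖weilSum F p d a‖ := by
  classical
  set q : ℕ := Fintype.card F with hq
  have hq1 : 1 < q := Fintype.one_lt_card
  set Ψ : AddChar F ℂ := psiChar F p with hΨ
  have hW : ∀ a : F, weilSum F p d a = ∑ x : F, Ψ (x ^ d - a * x) := by
    intro a
    simp only [weilSum, hΨ, psiChar_eq]
  -- bijectivity of x ↦ x^d
  have hbij : Function.Bijective (fun x : F => x ^ d) := by
    rw [Finite.injective_iff_bijective.symm]
    intro x y h
    simp only at h
    rcases eq_or_ne y 0 with hy | hy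
    · subst hy
      rw [zero_pow hd.ne'] at h
      exact pow_eq_zero_iff hd.ne' |>.mp h
    rcases eq_or_ne x 0 with hx | hx
    · subst hx
      rw [zero_pow hd.ne'] at h
      exact absurd (pow_eq_zero_iff hd.ne' |>.mp h.symm) hy
    have hcop : (Nat.card Fˣ).Coprime d := by
      rwa [Nat.card_eq_fintype_card, Fintype.card_units, Nat.Coprime, Nat.gcd_comm]
    have := hcop.pow_left_bijective.injective
      (a₁ := Units.mk0 x hx) (a₂ := Units.mk0 y hy) (by ext; exact h)
    simpa [Units.ext_iff] using this
  -- W 0 = 0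
  have hW0 : weilSum F p d 0 = 0 := by
    rw [hW]
    simp only [zero_mul, sub_zero]
    have : ∑ x : F, Ψ (x ^ d) = ∑ z : F, Ψ z := Fintype.sum_bijective _ hbij _ _ fun x => rfl
    rw [this]
    exact AddChar.sum_eq_zero_of_ne_one (psiChar_ne_one F p)
  -- second moment
  have hconj : ∀ u : F, (starRingEnd ℂ) (Ψ u) = Ψ (-u) := by
    intro u
    have h0 : 0 < ringChar F := by
      rw [ringChar.eq F p]; exact (Fact.out : p.Prime).pos
    rw [AddChar.starComp_apply h0, AddChar.inv_apply]
  have hmoment : ∑ a : F, weilSum F p d a * (starRingEnd ℂ) (weilSum F p d a)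
      = (q : ℂ) ^ 2 := by
    have step : ∀ a : F, weilSum F p d a * (starRingEnd ℂ) (weilSum F p d a)
        = ∑ x : F, ∑ y : F, Ψ (x ^ d - y ^ d) * Ψ (a * (y - x)) := by
      intro a
      rw [hW, map_sum, Finset.sum_mul_sum]
      refine Finset.sum_congr rfl fun x _ => Finset.sum_congr rfl fun y _ => ?_
      rw [hconj, ← AddChar.map_add_eq_mul, ← AddChar.map_add_eq_mul]
      congr 1
      ring
    calc ∑ a : F, weilSum F p d a * (starRingEnd ℂ) (weilSum F p d a)
        = ∑ a : F, ∑ x : F, ∑ y : F, Ψ (x ^ d - y ^ d) * Ψ (a * (y - x)) :=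
          Finset.sum_congr rfl fun a _ => step a
      _ = ∑ x : F, ∑ y : F, Ψ (x ^ d - y ^ d) * ∑ a : F, Ψ (a * (y - x)) := by
          rw [Finset.sum_comm]
          refine Finset.sum_congr rfl fun x _ => ?_
          rw [Finset.sum_comm]
          refine Finset.sum_congr rfl fun y _ => ?_
          rw [Finset.mul_sum]
      _ = ∑ x : F, ∑ y : F, Ψ (x ^ d - y ^ d)
            * (if y - x = 0 then (q : ℂ) else 0) := by
          refine Finset.sum_congr rfl fun x _ => Finset.sum_congr rfl fun y _ => ?_
          rw [AddChar.sum_mulShift _ (psiChar_isPrimitive F p)]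
          norm_num [hq]
      _ = ∑ x : F, ∑ y : F, (if y = x then (q : ℂ) else 0) := by
          refine Finset.sum_congr rfl fun x _ => Finset.sum_congr rfl fun y _ => ?_
          simp only [sub_eq_zero]
          split_ifs with h
          · subst h; simp
          · simp
      _ = ∑ _x : F, (q : ℂ) := by
          refine Finset.sum_congr rfl fun x _ => ?_
          simp
      _ = (q : ℂ) ^ 2 := by
          rw [Finset.sum_const, Finset.card_univ, ← hq]
          push_cast
          ring
  -- real second moment
  have hreal : ∑ a : F, (‖weilSum F p d a‖) ^ 2 = (q : ℝ) ^ 2 := by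
    have : ((∑ a : F, (‖weilSum F p d a‖) ^ 2 : ℝ) : ℂ) = ((q : ℝ) ^ 2 : ℝ) := by
      push_cast
      rw [← hmoment]
      refine Finset.sum_congr rfl fun a _ => ?_
      rw [Complex.mul_conj, ← Complex.sq_norm]
      norm_cast
    exact_mod_cast this
  by_contra hcon
  push_neg at hcon
  have hb : ∀ a : F, (‖weilSum F p d a‖) ^ 2 ≤ (q : ℝ) := by
    intro a
    have := hcon a
    calc (‖weilSum F p d a‖) ^ 2 ≤ (Real.sqrt q) ^ 2 := by
          exact pow_le_pow_left₀ (norm_nonneg _) this 2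
      _ = (q : ℝ) := Real.sq_sqrt (by positivity)
  have hsplit : ∑ a : F, (‖weilSum F p d a‖) ^ 2
      = ∑ a ∈ Finset.univ.erase (0 : F), (‖weilSum F p d a‖) ^ 2 := by
    rw [Finset.sum_erase]
    rw [hW0]
    simp
  have hle : ∑ a ∈ Finset.univ.erase (0 : F), (‖weilSum F p d a‖) ^ 2
      ≤ ((q - 1 : ℕ) : ℝ) * q := by
    have := Finset.sum_le_card_nsmul (Finset.univ.erase (0 : F))
      (fun a => (‖weilSum F p d a‖) ^ 2) (q : ℝ) (fun a _ => hb a)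
    rwa [Finset.card_erase_of_mem (Finset.mem_univ _), Finset.card_univ, ← hq,
      nsmul_eq_mul] at this
  have hlt : ((q - 1 : ℕ) : ℝ) * q < (q : ℝ) ^ 2 := by
    have h1 : ((q - 1 : ℕ) : ℝ) < (q : ℝ) := by
      exact_mod_cast Nat.sub_lt (by omega) one_pos
    have hqpos : (0 : ℝ) < q := by exact_mod_cast (by omega : 0 < q)
    nlinarith
  rw [hreal] at hsplit
  linarith [hsplit ▸ hle]
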